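/- (Realisation merging) Let J be one of JIK, JIKt, JIK4, JIS4, let A be a properly annotated intuitionistic modal formula, and let r₁, r₂ be realisation functions on A. Then there exist a realisation function r on A and a substitution σ with domain contained in the negatively-annotated variables of A, introducing no new variables, such that: (1) for every positive subformula X of A, J proves (X^{r₁})σ → (X^{r₂})σ → X^r; and (2) for every negative subformula X of A and each i∈{1,2}, J proves X^r → (X^{rᵢ})σ. -/

import Mathlib

namespace JIKPaper

-- Proof terms and satisfiers for intuitionistic justification logic.
mutual
inductive PrfTm : Type
  | pvar : Nat → PrfTm
  | pconst : Nat → PrfTm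
  | sum : PrfTm → PrfTm → PrfTm
  | app : PrfTm → PrfTm → PrfTm
  | upd : SatTm → PrfTm → PrfTm
  | bang : PrfTm → PrfTm
inductive SatTm : Type
  | svar : Nat → SatTm
  | uni : SatTm → SatTm → SatTm
  | prop : PrfTm → SatTm → SatTm
end

/-- Justification formulas. -/
inductive JForm : Type
  | bot : JForm
  | atom : Nat → JForm
  | and : JForm → JForm → JForm
  | or : JForm → JForm → JForm
  | impl : JForm → JForm → JForm
  | jst : PrfTm → JForm → JForm
  | sat : SatTm → JForm → JForm

/-- Intuitionistic modal formulas. -/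
inductive MForm : Type
  | bot : MForm
  | atom : Nat → MForm
  | and : MForm → MForm → MForm
  | or : MForm → MForm → MForm
  | impl : MForm → MForm → MForm
  | box : MForm → MForm
  | dia : MForm → MForm

/-- Axiom instances of the justification logics JIK (false,false), JIKt (true,false),
JIK4 (false,true), JIS4 (true,true): intuitionistic propositional axioms, jk1–jk5,
sum axioms, and optionally the jt and j4 axioms. -/
inductive JAx : Bool → Bool → JForm → Prop
  | ax1 {hT h4 : Bool} {A B : JForm} : JAx hT h4 (A.impl (B.impl A))
  | ax2 {hT h4 : Bool} {A B C : JForm} :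
      JAx hT h4 ((A.impl (B.impl C)).impl ((A.impl B).impl (A.impl C)))
  | andI {hT h4 : Bool} {A B : JForm} : JAx hT h4 (A.impl (B.impl (A.and B)))
  | andE1 {hT h4 : Bool} {A B : JForm} : JAx hT h4 ((A.and B).impl A)
  | andE2 {hT h4 : Bool} {A B : JForm} : JAx hT h4 ((A.and B).impl B)
  | orI1 {hT h4 : Bool} {A B : JForm} : JAx hT h4 (A.impl (A.or B))
  | orI2 {hT h4 : Bool} {A B : JForm} : JAx hT h4 (B.impl (A.or B))
  | orE {hT h4 : Bool} {A B C : JForm} :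
      JAx hT h4 ((A.impl C).impl ((B.impl C).impl ((A.or B).impl C)))
  | exf {hT h4 : Bool} {A : JForm} : JAx hT h4 (JForm.bot.impl A)
  | jk1 {hT h4 : Bool} {s t : PrfTm} {A B : JForm} :
      JAx hT h4 ((JForm.jst s (A.impl B)).impl
        ((JForm.jst t A).impl (JForm.jst (PrfTm.app s t) B)))
  | jk2 {hT h4 : Bool} {s : PrfTm} {μ : SatTm} {A B : JForm} :
      JAx hT h4 ((JForm.jst s (A.impl B)).impl
        ((JForm.sat μ A).impl (JForm.sat (SatTm.prop s μ) B)))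
  | jk3 {hT h4 : Bool} {μ : SatTm} {A B : JForm} :
      JAx hT h4 ((JForm.sat μ (A.or B)).impl ((JForm.sat μ A).or (JForm.sat μ B)))
  | jk4 {hT h4 : Bool} {μ : SatTm} {t : PrfTm} {A B : JForm} :
      JAx hT h4 (((JForm.sat μ A).impl (JForm.jst t B)).impl
        (JForm.jst (PrfTm.upd μ t) (A.impl B)))
  | jk5 {hT h4 : Bool} {μ : SatTm} :
      JAx hT h4 ((JForm.sat μ JForm.bot).impl JForm.bot)
  | sum1 {hT h4 : Bool} {s t : PrfTm} {A : JForm} :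
      JAx hT h4 ((JForm.jst s A).impl (JForm.jst (PrfTm.sum s t) A))
  | sum2 {hT h4 : Bool} {s t : PrfTm} {A : JForm} :
      JAx hT h4 ((JForm.jst t A).impl (JForm.jst (PrfTm.sum s t) A))
  | uni1 {hT h4 : Bool} {μ ν : SatTm} {A : JForm} :
      JAx hT h4 ((JForm.sat μ A).impl (JForm.sat (SatTm.uni μ ν) A))
  | uni2 {hT h4 : Bool} {μ ν : SatTm} {A : JForm} :
      JAx hT h4 ((JForm.sat ν A).impl (JForm.sat (SatTm.uni μ ν) A))
  | jtBox {h4 : Bool} {t : PrfTm} {A : JForm} : JAx true h4 ((JForm.jst t A).impl A)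
  | jtDia {h4 : Bool} {μ : SatTm} {A : JForm} : JAx true h4 (A.impl (JForm.sat μ A))
  | j4Box {hT : Bool} {t : PrfTm} {A : JForm} :
      JAx hT true ((JForm.jst t A).impl (JForm.jst (PrfTm.bang t) (JForm.jst t A)))
  | j4Dia {hT : Bool} {μ ν : SatTm} {A : JForm} :
      JAx hT true ((JForm.sat μ (JForm.sat ν A)).impl (JForm.sat ν A))

/-- `cₙ:⋯:c₁:A` for a list of constants. -/
def canChain (cs : List Nat) (A : JForm) : JForm :=
  cs.foldr (fun c B => JForm.jst (PrfTm.pconst c) B) A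

/-- Theorems of the justification logic: closure of the axioms under modus ponens and
the constant axiom necessitation rule (with the empty chain giving the axioms). -/
inductive JThm (hT h4 : Bool) : JForm → Prop
  | can {A : JForm} (cs : List Nat) : JAx hT h4 A → JThm hT h4 (canChain cs A)
  | mp {A B : JForm} : JThm hT h4 (A.impl B) → JThm hT h4 A → JThm hT h4 B

/-- Axiom instances of IK (false,false), IKt (true,false), IK4 (false,true), IS4 (true,true). -/
inductive MAx : Bool → Bool → MForm → Prop
  | ax1 {hT h4 : Bool} {A B : MForm} : MAx hT h4 (A.impl (B.impl A))
  | ax2 {hT h4 : Bool} {A B C : MForm} :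
      MAx hT h4 ((A.impl (B.impl C)).impl ((A.impl B).impl (A.impl C)))
  | andI {hT h4 : Bool} {A B : MForm} : MAx hT h4 (A.impl (B.impl (A.and B)))
  | andE1 {hT h4 : Bool} {A B : MForm} : MAx hT h4 ((A.and B).impl A)
  | andE2 {hT h4 : Bool} {A B : MForm} : MAx hT h4 ((A.and B).impl B)
  | orI1 {hT h4 : Bool} {A B : MForm} : MAx hT h4 (A.impl (A.or B))
  | orI2 {hT h4 : Bool} {A B : MForm} : MAx hT h4 (B.impl (A.or B))
  | orE {hT h4 : Bool} {A B C : MForm} :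
      MAx hT h4 ((A.impl C).impl ((B.impl C).impl ((A.or B).impl C)))
  | exf {hT h4 : Bool} {A : MForm} : MAx hT h4 (MForm.bot.impl A)
  | k1 {hT h4 : Bool} {A B : MForm} :
      MAx hT h4 ((A.impl B).box.impl (A.box.impl B.box))
  | k2 {hT h4 : Bool} {A B : MForm} :
      MAx hT h4 ((A.impl B).box.impl (A.dia.impl B.dia))
  | k3 {hT h4 : Bool} {A B : MForm} :
      MAx hT h4 ((A.or B).dia.impl (A.dia.or B.dia))
  | k4 {hT h4 : Bool} {A B : MForm} :
      MAx hT h4 ((A.dia.impl B.box).impl (A.impl B).box)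
  | k5 {hT h4 : Bool} : MAx hT h4 (MForm.bot.dia.impl MForm.bot)
  | tBox {h4 : Bool} {A : MForm} : MAx true h4 (A.box.impl A)
  | tDia {h4 : Bool} {A : MForm} : MAx true h4 (A.impl A.dia)
  | fourBox {hT : Bool} {A : MForm} : MAx hT true (A.box.impl A.box.box)
  | fourDia {hT : Bool} {A : MForm} : MAx hT true (A.dia.dia.impl A.dia)

/-- Theorems of the intuitionistic modal logic: modus ponens and necessitation. -/
inductive MThm (hT h4 : Bool) : MForm → Prop
  | ax {A : MForm} : MAx hT h4 A → MThm hT h4 A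
  | mp {A B : MForm} : MThm hT h4 (A.impl B) → MThm hT h4 A → MThm hT h4 B
  | nec {A : MForm} : MThm hT h4 A → MThm hT h4 A.box

/-- The forgetful projection from justification formulas to modal formulas. -/
def forget : JForm → MForm
  | .bot => .bot
  | .atom n => .atom n
  | .and A B => .and (forget A) (forget B)
  | .or A B => .or (forget A) (forget B)
  | .impl A B => .impl (forget A) (forget B)
  | .jst _ A => .box (forget A)
  | .sat _ A => .dia (forget A)


mutual
def pvarsP : PrfTm → List Nat
  | .pvar n => [n]
  | .pconst _ => []
  | .sum s t => pvarsP s ++ pvarsP t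
  | .app s t => pvarsP s ++ pvarsP t
  | .upd m t => pvarsS m ++ pvarsP t
  | .bang t => pvarsP t
def pvarsS : SatTm → List Nat
  | .svar _ => []
  | .uni m n => pvarsS m ++ pvarsS n
  | .prop t m => pvarsP t ++ pvarsS m
end

mutual
def svarsP : PrfTm → List Nat
  | .pvar _ => []
  | .pconst _ => []
  | .sum s t => svarsP s ++ svarsP t
  | .app s t => svarsP s ++ svarsP t
  | .upd m t => svarsS m ++ svarsP t
  | .bang t => svarsP t
def svarsS : SatTm → List Nat
  | .svar n => [n]
  | .uni m n => svarsS m ++ svarsS n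
  | .prop t m => svarsP t ++ svarsS m
end

def pvarsF : JForm → List Nat
  | .bot => []
  | .atom _ => []
  | .and A B => pvarsF A ++ pvarsF B
  | .or A B => pvarsF A ++ pvarsF B
  | .impl A B => pvarsF A ++ pvarsF B
  | .jst t A => pvarsP t ++ pvarsF A
  | .sat m A => pvarsS m ++ pvarsF A

def svarsF : JForm → List Nat
  | .bot => []
  | .atom _ => []
  | .and A B => svarsF A ++ svarsF B
  | .or A B => svarsF A ++ svarsF B
  | .impl A B => svarsF A ++ svarsF B
  | .jst t A => svarsP t ++ svarsF A
  | .sat m A => svarsS m ++ svarsF A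

mutual
def substP (sp : Nat → PrfTm) (ss : Nat → SatTm) : PrfTm → PrfTm
  | .pvar n => sp n
  | .pconst n => .pconst n
  | .sum s t => .sum (substP sp ss s) (substP sp ss t)
  | .app s t => .app (substP sp ss s) (substP sp ss t)
  | .upd m t => .upd (substS sp ss m) (substP sp ss t)
  | .bang t => .bang (substP sp ss t)
def substS (sp : Nat → PrfTm) (ss : Nat → SatTm) : SatTm → SatTm
  | .svar n => ss n
  | .uni m n => .uni (substS sp ss m) (substS sp ss n)
  | .prop t m => .prop (substP sp ss t) (substS sp ss m)
end

def substF (sp : Nat → PrfTm) (ss : Nat → SatTm) : JForm → JForm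
  | .bot => .bot
  | .atom n => .atom n
  | .and A B => .and (substF sp ss A) (substF sp ss B)
  | .or A B => .or (substF sp ss A) (substF sp ss B)
  | .impl A B => .impl (substF sp ss A) (substF sp ss B)
  | .jst t A => .jst (substP sp ss t) (substF sp ss A)
  | .sat m A => .sat (substS sp ss m) (substF sp ss A)

/-- Annotated intuitionistic modal formulas: each modality carries a natural number index. -/
inductive AForm : Type
  | bot : AForm
  | atom : Nat → AForm
  | and : AForm → AForm → AForm
  | or : AForm → AForm → AForm
  | impl : AForm → AForm → AForm
  | box : Nat → AForm → AForm
  | dia : Nat → AForm → AForm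

/-- Realise an annotated formula: `□ₙB ↦ rp(n):B`, `◇ₙB ↦ rs(n):B`. -/
def realise (rp : Nat → PrfTm) (rs : Nat → SatTm) : AForm → JForm
  | .bot => .bot
  | .atom n => .atom n
  | .and A B => .and (realise rp rs A) (realise rp rs B)
  | .or A B => .or (realise rp rs A) (realise rp rs B)
  | .impl A B => .impl (realise rp rs A) (realise rp rs B)
  | .box n A => .jst (rp n) (realise rp rs A)
  | .dia n A => .sat (rs n) (realise rp rs A)

def annList : AForm → List Nat
  | .bot => []
  | .atom _ => []
  | .and A B => annList A ++ annList B
  | .or A B => annList A ++ annList B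
  | .impl A B => annList A ++ annList B
  | .box n A => n :: annList A
  | .dia n A => n :: annList A

/-- `Sub p X A`: `X` is a subformula of `A` of polarity `p` (`true` = positive). -/
inductive Sub : Bool → AForm → AForm → Prop
  | refl {A : AForm} : Sub true A A
  | andl {p : Bool} {X A B : AForm} : Sub p X A → Sub p X (AForm.and A B)
  | andr {p : Bool} {X A B : AForm} : Sub p X B → Sub p X (AForm.and A B)
  | orl {p : Bool} {X A B : AForm} : Sub p X A → Sub p X (AForm.or A B)
  | orr {p : Bool} {X A B : AForm} : Sub p X B → Sub p X (AForm.or A B)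
  | impll {p : Bool} {X A B : AForm} : Sub p X A → Sub (!p) X (AForm.impl A B)
  | implr {p : Bool} {X A B : AForm} : Sub p X B → Sub p X (AForm.impl A B)
  | box {p : Bool} {X A : AForm} {n : Nat} : Sub p X A → Sub p X (AForm.box n A)
  | dia {p : Bool} {X A : AForm} {n : Nat} : Sub p X A → Sub p X (AForm.dia n A)

/-- Proper annotation: distinct indexes, □ indexed ≡ 0,1 mod 4, ◇ indexed ≡ 2,3 mod 4,
even indexes in positive position and odd in negative position. -/
def ProperlyAnnotated (A : AForm) : Prop :=
  (annList A).Nodup ∧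
  (∀ (p : Bool) (n : Nat) (B : AForm), Sub p (AForm.box n B) A → (n % 4 = 0 ∨ n % 4 = 1)) ∧
  (∀ (p : Bool) (n : Nat) (B : AForm), Sub p (AForm.dia n B) A → (n % 4 = 2 ∨ n % 4 = 3)) ∧
  (∀ (p : Bool) (n : Nat) (B : AForm), Sub p (AForm.box n B) A → (p = true ↔ n % 2 = 0)) ∧
  (∀ (p : Bool) (n : Nat) (B : AForm), Sub p (AForm.dia n B) A → (p = true ↔ n % 2 = 0))

/-- `(rp, rs)` is a realisation function on `A`: indexes `4n+1` go to the n-th proof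
variable, indexes `4n+3` to the n-th satisfier variable, with the satisfier
self-referentiality restriction. -/
def IsRealOn (rp : Nat → PrfTm) (rs : Nat → SatTm) (A : AForm) : Prop :=
  (∀ n : Nat, (4 * n + 1) ∈ annList A → rp (4 * n + 1) = PrfTm.pvar n) ∧
  (∀ n : Nat, (4 * n + 3) ∈ annList A → rs (4 * n + 3) = SatTm.svar n) ∧
  (∀ (p : Bool) (k : Nat) (B : AForm),
    Sub p (AForm.dia (4 * k + 3) B) A → k ∉ svarsF (realise rp rs B))


/-! ### Auxiliary infrastructure for the merging theorem -/

section MergingAux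

/-- Derivations (with explicit structure) in the justification logic. -/
inductive Der (hT h4 : Bool) : JForm → Type
  | can (cs : List Nat) {A : JForm} : JAx hT h4 A → Der hT h4 (canChain cs A)
  | mp {A B : JForm} : Der hT h4 (A.impl B) → Der hT h4 A → Der hT h4 B

def p0 : PrfTm := .pconst 0

def Der.tm {hT h4 : Bool} : {D : JForm} → Der hT h4 D → PrfTm
  | _, .can _ _ => p0
  | _, .mp d e => .app d.tm e.tm

def liftTm : PrfTm → PrfTm
  | .app s t => .app (.app p0 (liftTm s)) (liftTm t)
  | _ => p0

def Der.lift {hT h4 : Bool} : {D : JForm} → (d : Der hT h4 D) → Der hT h4 (.jst d.tm D)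
  | _, .can cs h => .can (0 :: cs) h
  | _, .mp d e => .mp (.mp (.can [] JAx.jk1) d.lift) e.lift

theorem Der.tm_lift {hT h4 : Bool} : {D : JForm} → (d : Der hT h4 D) → d.lift.tm = liftTm d.tm
  | _, .can _ _ => rfl
  | _, .mp d e => by
      show PrfTm.app (.app p0 d.lift.tm) e.lift.tm = liftTm (.app d.tm e.tm)
      rw [d.tm_lift, e.tm_lift, liftTm]

theorem Der.thm {hT h4 : Bool} : {D : JForm} → Der hT h4 D → JThm hT h4 D
  | _, .can cs h => JThm.can cs h
  | _, .mp d e => JThm.mp d.thm e.thm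

/-- `DT t D`: there is a derivation of `D` whose internalisation term is `t`. -/
def DT (hT h4 : Bool) (t : PrfTm) (D : JForm) : Prop :=
  ∃ d : Der hT h4 D, d.tm = t

theorem DT.ax {hT h4 : Bool} {A : JForm} (h : JAx hT h4 A) : DT hT h4 p0 A :=
  ⟨.can [] h, rfl⟩

theorem DT.mp {hT h4 : Bool} {s t : PrfTm} {A B : JForm}
    (h1 : DT hT h4 s (A.impl B)) (h2 : DT hT h4 t A) : DT hT h4 (.app s t) B := by
  obtain ⟨d1, rfl⟩ := h1; obtain ⟨d2, rfl⟩ := h2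
  exact ⟨.mp d1 d2, rfl⟩

theorem DT.lift {hT h4 : Bool} {t : PrfTm} {A : JForm} (h : DT hT h4 t A) :
    DT hT h4 (liftTm t) (.jst t A) := by
  obtain ⟨d, rfl⟩ := h; exact ⟨d.lift, d.tm_lift⟩

theorem DT.thm {hT h4 : Bool} {t : PrfTm} {A : JForm} (h : DT hT h4 t A) : JThm hT h4 A := by
  obtain ⟨d, -⟩ := h; exact d.thm

def iTm : PrfTm := .app (.app p0 p0) p0
def compTm (s t : PrfTm) : PrfTm := .app (.app p0 (.app p0 s)) t
def cbTm : PrfTm := .app (.app p0 (.app p0 p0)) p0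
def postTm (g : PrfTm) : PrfTm := .app cbTm g
def preTm (f : PrfTm) : PrfTm := .app (.app p0 cbTm) (.app p0 f)
def implMonoTm (f g : PrfTm) : PrfTm := compTm (postTm g) (preTm f)
def pairTm (s t : PrfTm) : PrfTm := .app (.app p0 (compTm p0 s)) t
def andMonoTm (f g : PrfTm) : PrfTm := pairTm (compTm f p0) (compTm g p0)
def orMonoTm (f g : PrfTm) : PrfTm := .app (.app p0 (compTm p0 f)) (compTm p0 g)
def modTm (c : PrfTm) : PrfTm := compTm p0 (.app p0 (liftTm c))

variable {hT h4 : Bool}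

theorem dtI (A : JForm) : DT hT h4 iTm (A.impl A) :=
  ((DT.ax (JAx.ax2 (A := A) (B := A.impl A) (C := A))).mp
    (DT.ax (JAx.ax1 (A := A) (B := A.impl A)))).mp (DT.ax (JAx.ax1 (A := A) (B := A)))

theorem dtComp {s t : PrfTm} {A B C : JForm} (h1 : DT hT h4 s (B.impl C))
    (h2 : DT hT h4 t (A.impl B)) : DT hT h4 (compTm s t) (A.impl C) :=
  ((DT.ax (JAx.ax2 (A := A) (B := B) (C := C))).mp
    ((DT.ax (JAx.ax1 (A := B.impl C) (B := A))).mp h1)).mp h2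

theorem dtPair {s t : PrfTm} {A B C : JForm} (h1 : DT hT h4 s (C.impl A))
    (h2 : DT hT h4 t (C.impl B)) : DT hT h4 (pairTm s t) (C.impl (A.and B)) :=
  ((DT.ax (JAx.ax2 (A := C) (B := B) (C := A.and B))).mp
    (dtComp (DT.ax (JAx.andI (A := A) (B := B))) h1)).mp h2

theorem dtAndMono {f g : PrfTm} {A A' B B' : JForm} (hf : DT hT h4 f (A.impl A'))
    (hg : DT hT h4 g (B.impl B')) : DT hT h4 (andMonoTm f g) ((A.and B).impl (A'.and B')) :=
  dtPair (dtComp hf (DT.ax JAx.andE1)) (dtComp hg (DT.ax JAx.andE2))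

theorem dtOrMono {f g : PrfTm} {A A' B B' : JForm} (hf : DT hT h4 f (A.impl A'))
    (hg : DT hT h4 g (B.impl B')) : DT hT h4 (orMonoTm f g) ((A.or B).impl (A'.or B')) :=
  ((DT.ax JAx.orE).mp (dtComp (DT.ax JAx.orI1) hf)).mp (dtComp (DT.ax JAx.orI2) hg)

theorem dtCB {A B C : JForm} : DT hT h4 cbTm ((B.impl C).impl ((A.impl B).impl (A.impl C))) :=
  ((DT.ax (JAx.ax2 (A := B.impl C) (B := A.impl (B.impl C))
      (C := (A.impl B).impl (A.impl C)))).mp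
    ((DT.ax (JAx.ax1 (A := (A.impl (B.impl C)).impl ((A.impl B).impl (A.impl C)))
        (B := B.impl C))).mp
      (DT.ax (JAx.ax2 (A := A) (B := B) (C := C))))).mp
    (DT.ax (JAx.ax1 (A := B.impl C) (B := A)))

theorem dtPost {g : PrfTm} {A B B' : JForm} (hg : DT hT h4 g (B.impl B')) :
    DT hT h4 (postTm g) ((A.impl B).impl (A.impl B')) :=
  (dtCB (A := A) (B := B) (C := B')).mp hg

theorem dtPre {f : PrfTm} {A A' B : JForm} (hf : DT hT h4 f (A'.impl A)) :
    DT hT h4 (preTm f) ((A.impl B).impl (A'.impl B)) :=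
  ((DT.ax (JAx.ax2 (A := A.impl B) (B := A'.impl A) (C := A'.impl B))).mp
    (dtCB (A := A') (B := A) (C := B))).mp
    ((DT.ax (JAx.ax1 (A := A'.impl A) (B := A.impl B))).mp hf)

theorem dtImplMono {f g : PrfTm} {A A' B B' : JForm} (hf : DT hT h4 f (A'.impl A))
    (hg : DT hT h4 g (B.impl B')) : DT hT h4 (implMonoTm f g) ((A.impl B).impl (A'.impl B')) :=
  dtComp (dtPost hg) (dtPre hf)

theorem dtJstMono {c : PrfTm} {P Q : JForm} (hc : DT hT h4 c (P.impl Q)) (t : PrfTm) :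
    DT hT h4 (.app p0 (liftTm c)) ((JForm.jst t P).impl (.jst (.app c t) Q)) :=
  (DT.ax JAx.jk1).mp hc.lift

theorem dtSatMono {c : PrfTm} {P Q : JForm} (hc : DT hT h4 c (P.impl Q)) (μ : SatTm) :
    DT hT h4 (.app p0 (liftTm c)) ((JForm.sat μ P).impl (.sat (.prop c μ) Q)) :=
  (DT.ax JAx.jk2).mp hc.lift

theorem dtBoxL {c : PrfTm} {P Q : JForm} (hc : DT hT h4 c (P.impl Q)) (t u : PrfTm) :
    DT hT h4 (modTm c) ((JForm.jst t P).impl (.jst (.sum (.app c t) u) Q)) :=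
  dtComp (DT.ax JAx.sum1) (dtJstMono hc t)

theorem dtBoxR {c : PrfTm} {P Q : JForm} (hc : DT hT h4 c (P.impl Q)) (t u : PrfTm) :
    DT hT h4 (modTm c) ((JForm.jst t P).impl (.jst (.sum u (.app c t)) Q)) :=
  dtComp (DT.ax JAx.sum2) (dtJstMono hc t)

theorem dtDiaL {c : PrfTm} {P Q : JForm} (hc : DT hT h4 c (P.impl Q)) (μ ν : SatTm) :
    DT hT h4 (modTm c) ((JForm.sat μ P).impl (.sat (.uni (.prop c μ) ν) Q)) :=
  dtComp (DT.ax JAx.uni1) (dtSatMono hc μ)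

theorem dtDiaR {c : PrfTm} {P Q : JForm} (hc : DT hT h4 c (P.impl Q)) (μ ν : SatTm) :
    DT hT h4 (modTm c) ((JForm.sat μ P).impl (.sat (.uni ν (.prop c μ)) Q)) :=
  dtComp (DT.ax JAx.uni2) (dtSatMono hc μ)

end MergingAux



section MergingAux2

/-! #### Subformula and annotation lemmas -/

theorem sub_comp_aux {p : Bool} {X A : AForm} (h2 : Sub p X A) :
    ∀ {q : Bool} {Y : AForm}, Sub q Y X → Sub (q == p) Y A := by
  induction h2 with
  | refl => intro q Y h1; cases q <;> simpa using h1
  | andl _ ih => intro q Y h1; exact Sub.andl (ih h1)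
  | andr _ ih => intro q Y h1; exact Sub.andr (ih h1)
  | orl _ ih => intro q Y h1; exact Sub.orl (ih h1)
  | orr _ ih => intro q Y h1; exact Sub.orr (ih h1)
  | @impll p1 X1 A1 B1 _ ih =>
      intro q Y h1
      rw [show (q == !p1) = !(q == p1) by cases q <;> cases p1 <;> rfl]
      exact Sub.impll (ih h1)
  | implr _ ih => intro q Y h1; exact Sub.implr (ih h1)
  | box _ ih => intro q Y h1; exact Sub.box (ih h1)
  | dia _ ih => intro q Y h1; exact Sub.dia (ih h1)

theorem sub_comp {q p : Bool} {Y X A : AForm} (h1 : Sub q Y X) (h2 : Sub p X A) :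
    Sub (q == p) Y A := sub_comp_aux h2 h1

theorem sub_andl {p : Bool} {X Y A : AForm} (h : Sub p (AForm.and X Y) A) : Sub p X A := by
  have := sub_comp (Sub.andl (Sub.refl (A := X))) h; simpa using this
theorem sub_andr {p : Bool} {X Y A : AForm} (h : Sub p (AForm.and X Y) A) : Sub p Y A := by
  have := sub_comp (Sub.andr (Sub.refl (A := Y))) h; simpa using this
theorem sub_orl {p : Bool} {X Y A : AForm} (h : Sub p (AForm.or X Y) A) : Sub p X A := by
  have := sub_comp (Sub.orl (Sub.refl (A := X))) h; simpa using this
theorem sub_orr {p : Bool} {X Y A : AForm} (h : Sub p (AForm.or X Y) A) : Sub p Y A := by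
  have := sub_comp (Sub.orr (Sub.refl (A := Y))) h; simpa using this
theorem sub_impll {p : Bool} {X Y A : AForm} (h : Sub p (AForm.impl X Y) A) : Sub (!p) X A := by
  have := sub_comp (Sub.impll (Sub.refl (A := X))) h
  have e : ∀ b : Bool, ((!true) == b) = !b := by decide
  rwa [e] at this
theorem sub_implr {p : Bool} {X Y A : AForm} (h : Sub p (AForm.impl X Y) A) : Sub p Y A := by
  have := sub_comp (Sub.implr (Sub.refl (A := Y))) h; simpa using this
theorem sub_box {p : Bool} {X A : AForm} {n : Nat} (h : Sub p (AForm.box n X) A) : Sub p X A := by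
  have := sub_comp (Sub.box (n := n) (Sub.refl (A := X))) h; simpa using this
theorem sub_dia {p : Bool} {X A : AForm} {n : Nat} (h : Sub p (AForm.dia n X) A) : Sub p X A := by
  have := sub_comp (Sub.dia (n := n) (Sub.refl (A := X))) h; simpa using this

theorem Sub.ann {p : Bool} {X A : AForm} (h : Sub p X A) : annList X ⊆ annList A := by
  induction h with
  | refl => exact fun x hx => hx
  | andl _ ih => intro x hx; simp [annList]; exact Or.inl (ih hx)
  | andr _ ih => intro x hx; simp [annList]; exact Or.inr (ih hx)
  | orl _ ih => intro x hx; simp [annList]; exact Or.inl (ih hx)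
  | orr _ ih => intro x hx; simp [annList]; exact Or.inr (ih hx)
  | impll _ ih => intro x hx; simp [annList]; exact Or.inl (ih hx)
  | implr _ ih => intro x hx; simp [annList]; exact Or.inr (ih hx)
  | box _ ih => intro x hx; simp [annList]; exact Or.inr (ih hx)
  | dia _ ih => intro x hx; simp [annList]; exact Or.inr (ih hx)

/-- Find the scope of the modality with index `n`. -/
def scope? : AForm → Nat → Option AForm
  | .bot, _ => none
  | .atom _, _ => none
  | .and A B, n => (scope? A n).orElse fun _ => scope? B n
  | .or A B, n => (scope? A n).orElse fun _ => scope? B n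
  | .impl A B, n => (scope? A n).orElse fun _ => scope? B n
  | .box m A, n => if m = n then some A else scope? A n
  | .dia m A, n => if m = n then some A else scope? A n

theorem scope_none {n : Nat} : ∀ {A : AForm}, n ∉ annList A → scope? A n = none := by
  intro A
  induction A with
  | bot => intro; rfl
  | atom m => intro; rfl
  | and X Y ihX ihY =>
      intro h; simp [annList] at h
      simp [scope?, ihX h.1, ihY h.2, Option.orElse]
  | or X Y ihX ihY =>
      intro h; simp [annList] at h
      simp [scope?, ihX h.1, ihY h.2, Option.orElse]
  | impl X Y ihX ihY =>
      intro h; simp [annList] at h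
      simp [scope?, ihX h.1, ihY h.2, Option.orElse]
  | box m X ih =>
      intro h; simp [annList] at h
      simp [scope?, Ne.symm h.1, ih h.2]
  | dia m X ih =>
      intro h; simp [annList] at h
      simp [scope?, Ne.symm h.1, ih h.2]

theorem scope_mem {n : Nat} {A B : AForm} (h : scope? A n = some B) : n ∈ annList A := by
  by_contra hn
  rw [scope_none hn] at h; simp at h

theorem scope_sub {n : Nat} : ∀ {A B : AForm}, scope? A n = some B →
    (∃ p, Sub p (AForm.box n B) A) ∨ ∃ p, Sub p (AForm.dia n B) A := by
  intro A
  induction A with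
  | bot => intro B h; simp [scope?] at h
  | atom m => intro B h; simp [scope?] at h
  | and X Y ihX ihY =>
      intro B h
      rcases hX : scope? X n with _ | C
      · rw [scope?, hX] at h; simp [Option.orElse] at h
        rcases ihY h with ⟨p, hp⟩ | ⟨p, hp⟩
        · exact Or.inl ⟨p, Sub.andr hp⟩
        · exact Or.inr ⟨p, Sub.andr hp⟩
      · rw [scope?, hX] at h; simp [Option.orElse] at h; subst h
        rcases ihX hX with ⟨p, hp⟩ | ⟨p, hp⟩
        · exact Or.inl ⟨p, Sub.andl hp⟩
        · exact Or.inr ⟨p, Sub.andl hp⟩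
  | or X Y ihX ihY =>
      intro B h
      rcases hX : scope? X n with _ | C
      · rw [scope?, hX] at h; simp [Option.orElse] at h
        rcases ihY h with ⟨p, hp⟩ | ⟨p, hp⟩
        · exact Or.inl ⟨p, Sub.orr hp⟩
        · exact Or.inr ⟨p, Sub.orr hp⟩
      · rw [scope?, hX] at h; simp [Option.orElse] at h; subst h
        rcases ihX hX with ⟨p, hp⟩ | ⟨p, hp⟩
        · exact Or.inl ⟨p, Sub.orl hp⟩
        · exact Or.inr ⟨p, Sub.orl hp⟩
  | impl X Y ihX ihY =>
      intro B h
      rcases hX : scope? X n with _ | C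
      · rw [scope?, hX] at h; simp [Option.orElse] at h
        rcases ihY h with ⟨p, hp⟩ | ⟨p, hp⟩
        · exact Or.inl ⟨p, Sub.implr hp⟩
        · exact Or.inr ⟨p, Sub.implr hp⟩
      · rw [scope?, hX] at h; simp [Option.orElse] at h; subst h
        rcases ihX hX with ⟨p, hp⟩ | ⟨p, hp⟩
        · exact Or.inl ⟨!p, Sub.impll hp⟩
        · exact Or.inr ⟨!p, Sub.impll hp⟩
  | box m X ih =>
      intro B h
      rw [scope?] at h
      by_cases hm : m = n
      · rw [if_pos hm] at h
        cases h; subst hm; exact Or.inl ⟨true, Sub.refl⟩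
      · rw [if_neg hm] at h
        rcases ih h with ⟨p, hp⟩ | ⟨p, hp⟩
        · exact Or.inl ⟨p, Sub.box hp⟩
        · exact Or.inr ⟨p, Sub.box hp⟩
  | dia m X ih =>
      intro B h
      rw [scope?] at h
      by_cases hm : m = n
      · rw [if_pos hm] at h
        cases h; subst hm; exact Or.inr ⟨true, Sub.refl⟩
      · rw [if_neg hm] at h
        rcases ih h with ⟨p, hp⟩ | ⟨p, hp⟩
        · exact Or.inl ⟨p, Sub.dia hp⟩
        · exact Or.inr ⟨p, Sub.dia hp⟩

theorem scope_eq_box {n : Nat} {B : AForm} :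
    ∀ {A : AForm} {p : Bool}, (annList A).Nodup → Sub p (AForm.box n B) A →
      scope? A n = some B := by
  intro A
  induction A with
  | bot => intro p _ h; cases h
  | atom m => intro p _ h; cases h
  | and X Y ihX ihY =>
      intro p hnd h
      have hh := List.nodup_append.mp (by simpa [annList] using hnd)
      cases h with
      | andl h' => simp [scope?, ihX hh.1 h', Option.orElse]
      | andr h' =>
          have hmem : n ∈ annList Y := h'.ann (by simp [annList])
          have hnot : n ∉ annList X := fun hc => hh.2.2 n hc n hmem rfl
          simp [scope?, scope_none hnot, Option.orElse, ihY hh.2.1 h']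
  | or X Y ihX ihY =>
      intro p hnd h
      have hh := List.nodup_append.mp (by simpa [annList] using hnd)
      cases h with
      | orl h' => simp [scope?, ihX hh.1 h', Option.orElse]
      | orr h' =>
          have hmem : n ∈ annList Y := h'.ann (by simp [annList])
          have hnot : n ∉ annList X := fun hc => hh.2.2 n hc n hmem rfl
          simp [scope?, scope_none hnot, Option.orElse, ihY hh.2.1 h']
  | impl X Y ihX ihY =>
      intro p hnd h
      have hh := List.nodup_append.mp (by simpa [annList] using hnd)
      cases h with
      | impll h' => simp [scope?, ihX hh.1 h', Option.orElse]
      | implr h' =>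
          have hmem : n ∈ annList Y := h'.ann (by simp [annList])
          have hnot : n ∉ annList X := fun hc => hh.2.2 n hc n hmem rfl
          simp [scope?, scope_none hnot, Option.orElse, ihY hh.2.1 h']
  | box m X ih =>
      intro p hnd h
      have hh := List.nodup_cons.mp (by simpa [annList] using hnd)
      cases h with
      | refl => simp [scope?]
      | box h' =>
          have hmem : n ∈ annList X := h'.ann (by simp [annList])
          have hne : m ≠ n := fun e => hh.1 (e ▸ hmem)
          simp [scope?, hne, ih hh.2 h']
  | dia m X ih =>
      intro p hnd h
      have hh := List.nodup_cons.mp (by simpa [annList] using hnd)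
      cases h with
      | dia h' =>
          have hmem : n ∈ annList X := h'.ann (by simp [annList])
          have hne : m ≠ n := fun e => hh.1 (e ▸ hmem)
          simp [scope?, hne, ih hh.2 h']

theorem scope_eq_dia {n : Nat} {B : AForm} :
    ∀ {A : AForm} {p : Bool}, (annList A).Nodup → Sub p (AForm.dia n B) A →
      scope? A n = some B := by
  intro A
  induction A with
  | bot => intro p _ h; cases h
  | atom m => intro p _ h; cases h
  | and X Y ihX ihY =>
      intro p hnd h
      have hh := List.nodup_append.mp (by simpa [annList] using hnd)
      cases h with
      | andl h' => simp [scope?, ihX hh.1 h', Option.orElse]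
      | andr h' =>
          have hmem : n ∈ annList Y := h'.ann (by simp [annList])
          have hnot : n ∉ annList X := fun hc => hh.2.2 n hc n hmem rfl
          simp [scope?, scope_none hnot, Option.orElse, ihY hh.2.1 h']
  | or X Y ihX ihY =>
      intro p hnd h
      have hh := List.nodup_append.mp (by simpa [annList] using hnd)
      cases h with
      | orl h' => simp [scope?, ihX hh.1 h', Option.orElse]
      | orr h' =>
          have hmem : n ∈ annList Y := h'.ann (by simp [annList])
          have hnot : n ∉ annList X := fun hc => hh.2.2 n hc n hmem rfl
          simp [scope?, scope_none hnot, Option.orElse, ihY hh.2.1 h']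
  | impl X Y ihX ihY =>
      intro p hnd h
      have hh := List.nodup_append.mp (by simpa [annList] using hnd)
      cases h with
      | impll h' => simp [scope?, ihX hh.1 h', Option.orElse]
      | implr h' =>
          have hmem : n ∈ annList Y := h'.ann (by simp [annList])
          have hnot : n ∉ annList X := fun hc => hh.2.2 n hc n hmem rfl
          simp [scope?, scope_none hnot, Option.orElse, ihY hh.2.1 h']
  | box m X ih =>
      intro p hnd h
      have hh := List.nodup_cons.mp (by simpa [annList] using hnd)
      cases h with
      | box h' =>
          have hmem : n ∈ annList X := h'.ann (by simp [annList])
          have hne : m ≠ n := fun e => hh.1 (e ▸ hmem)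
          simp [scope?, hne, ih hh.2 h']
  | dia m X ih =>
      intro p hnd h
      have hh := List.nodup_cons.mp (by simpa [annList] using hnd)
      cases h with
      | refl => simp [scope?]
      | dia h' =>
          have hmem : n ∈ annList X := h'.ann (by simp [annList])
          have hne : m ≠ n := fun e => hh.1 (e ▸ hmem)
          simp [scope?, hne, ih hh.2 h']

end MergingAux2



section MergingAux3

theorem liftTm_closed : ∀ t, pvarsP (liftTm t) = [] ∧ svarsP (liftTm t) = []
  | .pvar _ => ⟨rfl, rfl⟩
  | .pconst _ => ⟨rfl, rfl⟩
  | .sum _ _ => ⟨rfl, rfl⟩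
  | .upd _ _ => ⟨rfl, rfl⟩
  | .bang _ => ⟨rfl, rfl⟩
  | .app s t => by
      have hs := liftTm_closed s; have ht := liftTm_closed t
      simp [liftTm, pvarsP, svarsP, hs.1, hs.2, ht.1, ht.2, p0]

/-- The realisation-merging combinator terms, by recursion on the annotated formula.
`cTm i pol X` internalises, for `pol = true`, `(X^{r_i})σ → X^r` and, for `pol = false`,
`X^r → (X^{r_i})σ`. -/
def cTm (i : Bool) : Bool → AForm → PrfTm
  | _, .bot => iTm
  | _, .atom _ => iTm
  | pol, .and X Y => andMonoTm (cTm i pol X) (cTm i pol Y)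
  | pol, .or X Y => orMonoTm (cTm i pol X) (cTm i pol Y)
  | pol, .impl X Y => implMonoTm (cTm i (!pol) X) (cTm i pol Y)
  | pol, .box _ X => modTm (cTm i pol X)
  | pol, .dia _ X => modTm (cTm i pol X)

theorem cTm_closed (i : Bool) : ∀ (X : AForm) (pol : Bool),
    pvarsP (cTm i pol X) = [] ∧ svarsP (cTm i pol X) = [] := by
  intro X
  induction X with
  | bot => intro pol; exact ⟨rfl, rfl⟩
  | atom n => intro pol; exact ⟨rfl, rfl⟩
  | and X Y ihX ihY =>
      intro pol
      simp [cTm, andMonoTm, pairTm, compTm, p0, pvarsP, svarsP,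
        (ihX pol).1, (ihX pol).2, (ihY pol).1, (ihY pol).2]
  | or X Y ihX ihY =>
      intro pol
      simp [cTm, orMonoTm, compTm, p0, pvarsP, svarsP,
        (ihX pol).1, (ihX pol).2, (ihY pol).1, (ihY pol).2]
  | impl X Y ihX ihY =>
      intro pol
      simp [cTm, implMonoTm, compTm, postTm, preTm, cbTm, p0, pvarsP, svarsP,
        (ihX (!pol)).1, (ihX (!pol)).2, (ihY pol).1, (ihY pol).2]
  | box n X ih =>
      intro pol
      simp [cTm, modTm, compTm, p0, pvarsP, svarsP,
        (liftTm_closed (cTm i pol X)).1, (liftTm_closed (cTm i pol X)).2]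
  | dia n X ih =>
      intro pol
      simp [cTm, modTm, compTm, p0, pvarsP, svarsP,
        (liftTm_closed (cTm i pol X)).1, (liftTm_closed (cTm i pol X)).2]

/-- The merged substitution on proof variables. -/
def spF (A : AForm) (n : Nat) : PrfTm :=
  match scope? A (4 * n + 1) with
  | some B => .sum (.app (cTm false false B) (.pvar n)) (.app (cTm true false B) (.pvar n))
  | none => .pvar n

/-- The merged substitution on satisfier variables. -/
def ssF (A : AForm) (k : Nat) : SatTm :=
  match scope? A (4 * k + 3) with
  | some B => .uni (.prop (cTm false false B) (.svar k)) (.prop (cTm true false B) (.svar k))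
  | none => .svar k

/-- The merged realisation function on proof terms. -/
def rpF (A : AForm) (rp1 rp2 : Nat → PrfTm) (m : Nat) : PrfTm :=
  if m % 4 = 1 then .pvar (m / 4)
  else match scope? A m with
    | some C => .sum (.app (cTm false true C) (substP (spF A) (ssF A) (rp1 m)))
                     (.app (cTm true true C) (substP (spF A) (ssF A) (rp2 m)))
    | none => rp1 m

/-- The merged realisation function on satisfiers. -/
def rsF (A : AForm) (rs1 rs2 : Nat → SatTm) (m : Nat) : SatTm :=
  if m % 4 = 3 then .svar (m / 4)
  else match scope? A m with
    | some C => .uni (.prop (cTm false true C) (substS (spF A) (ssF A) (rs1 m)))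
                     (.prop (cTm true true C) (substS (spF A) (ssF A) (rs2 m)))
    | none => rs1 m

theorem svars_spF (A : AForm) (n : Nat) : svarsP (spF A n) = [] := by
  unfold spF
  cases scope? A (4 * n + 1) with
  | none => rfl
  | some B => simp [svarsP, (cTm_closed false B false).2, (cTm_closed true B false).2]

theorem svars_ssF (A : AForm) (k : Nat) : ∀ x ∈ svarsS (ssF A k), x = k := by
  unfold ssF
  cases scope? A (4 * k + 3) with
  | none => simp [svarsS]
  | some B =>
      simp [svarsS, (cTm_closed false B false).2, (cTm_closed true B false).2]

mutual
theorem svars_substP {sp : Nat → PrfTm} {ss : Nat → SatTm}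
    (hp : ∀ n, svarsP (sp n) = []) (hs : ∀ k x, x ∈ svarsS (ss k) → x = k) :
    ∀ t x, x ∈ svarsP (substP sp ss t) → x ∈ svarsP t
  | .pvar n, x => by simp [substP, hp, svarsP]
  | .pconst n, x => by simp [substP, svarsP]
  | .sum s t, x => by
      simp only [substP, svarsP, List.mem_append]
      rintro (h | h)
      · exact Or.inl (svars_substP hp hs s x h)
      · exact Or.inr (svars_substP hp hs t x h)
  | .app s t, x => by
      simp only [substP, svarsP, List.mem_append]
      rintro (h | h)
      · exact Or.inl (svars_substP hp hs s x h)
      · exact Or.inr (svars_substP hp hs t x h)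
  | .upd μ t, x => by
      simp only [substP, svarsP, List.mem_append]
      rintro (h | h)
      · exact Or.inl (svars_substS hp hs μ x h)
      · exact Or.inr (svars_substP hp hs t x h)
  | .bang t, x => by
      simp only [substP, svarsP]
      exact svars_substP hp hs t x
theorem svars_substS {sp : Nat → PrfTm} {ss : Nat → SatTm}
    (hp : ∀ n, svarsP (sp n) = []) (hs : ∀ k x, x ∈ svarsS (ss k) → x = k) :
    ∀ μ x, x ∈ svarsS (substS sp ss μ) → x ∈ svarsS μ
  | .svar k, x => by
      simp only [substS, svarsS, List.mem_singleton]
      exact hs k x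
  | .uni μ ν, x => by
      simp only [substS, svarsS, List.mem_append]
      rintro (h | h)
      · exact Or.inl (svars_substS hp hs μ x h)
      · exact Or.inr (svars_substS hp hs ν x h)
  | .prop t μ, x => by
      simp only [substS, svarsS, List.mem_append]
      rintro (h | h)
      · exact Or.inl (svars_substP hp hs t x h)
      · exact Or.inr (svars_substS hp hs μ x h)
end

theorem pvars_realise_mono {rp : Nat → PrfTm} {rs : Nat → SatTm} {p : Bool} {Y A : AForm}
    (h : Sub p Y A) : ∀ x ∈ pvarsF (realise rp rs Y), x ∈ pvarsF (realise rp rs A) := by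
  induction h with
  | refl => exact fun x hx => hx
  | andl _ ih => intro x hx; simp [realise, pvarsF]; exact Or.inl (ih x hx)
  | andr _ ih => intro x hx; simp [realise, pvarsF]; exact Or.inr (ih x hx)
  | orl _ ih => intro x hx; simp [realise, pvarsF]; exact Or.inl (ih x hx)
  | orr _ ih => intro x hx; simp [realise, pvarsF]; exact Or.inr (ih x hx)
  | impll _ ih => intro x hx; simp [realise, pvarsF]; exact Or.inl (ih x hx)
  | implr _ ih => intro x hx; simp [realise, pvarsF]; exact Or.inr (ih x hx)
  | box _ ih => intro x hx; simp [realise, pvarsF]; exact Or.inr (ih x hx)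
  | dia _ ih => intro x hx; simp [realise, pvarsF]; exact Or.inr (ih x hx)

theorem svars_realise_mono {rp : Nat → PrfTm} {rs : Nat → SatTm} {p : Bool} {Y A : AForm}
    (h : Sub p Y A) : ∀ x ∈ svarsF (realise rp rs Y), x ∈ svarsF (realise rp rs A) := by
  induction h with
  | refl => exact fun x hx => hx
  | andl _ ih => intro x hx; simp [realise, svarsF]; exact Or.inl (ih x hx)
  | andr _ ih => intro x hx; simp [realise, svarsF]; exact Or.inr (ih x hx)
  | orl _ ih => intro x hx; simp [realise, svarsF]; exact Or.inl (ih x hx)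
  | orr _ ih => intro x hx; simp [realise, svarsF]; exact Or.inr (ih x hx)
  | impll _ ih => intro x hx; simp [realise, svarsF]; exact Or.inl (ih x hx)
  | implr _ ih => intro x hx; simp [realise, svarsF]; exact Or.inr (ih x hx)
  | box _ ih => intro x hx; simp [realise, svarsF]; exact Or.inr (ih x hx)
  | dia _ ih => intro x hx; simp [realise, svarsF]; exact Or.inr (ih x hx)

theorem svars_incl (A : AForm) (rp1 rp2 : Nat → PrfTm) (rs1 rs2 : Nat → SatTm)
    (hr1 : ∀ m, m % 4 = 3 → m ∈ annList A → rs1 m = .svar (m / 4)) :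
    ∀ B, annList B ⊆ annList A →
      ∀ x, x ∈ svarsF (realise (rpF A rp1 rp2) (rsF A rs1 rs2) B) →
        x ∈ svarsF (realise rp1 rs1 B) ∨ x ∈ svarsF (realise rp2 rs2 B) := by
  intro B
  induction B with
  | bot => intro _ x hx; simp [realise, svarsF] at hx
  | atom n => intro _ x hx; simp [realise, svarsF] at hx
  | and X Y ihX ihY =>
      intro hsub x hx
      have hsX : annList X ⊆ annList A := fun y hy => hsub (by simp [annList]; exact Or.inl hy)
      have hsY : annList Y ⊆ annList A := fun y hy => hsub (by simp [annList]; exact Or.inr hy)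
      simp only [realise, svarsF, List.mem_append] at hx ⊢
      rcases hx with hx | hx
      · rcases ihX hsX x hx with h | h
        · exact Or.inl (Or.inl h)
        · exact Or.inr (Or.inl h)
      · rcases ihY hsY x hx with h | h
        · exact Or.inl (Or.inr h)
        · exact Or.inr (Or.inr h)
  | or X Y ihX ihY =>
      intro hsub x hx
      have hsX : annList X ⊆ annList A := fun y hy => hsub (by simp [annList]; exact Or.inl hy)
      have hsY : annList Y ⊆ annList A := fun y hy => hsub (by simp [annList]; exact Or.inr hy)
      simp only [realise, svarsF, List.mem_append] at hx ⊢
      rcases hx with hx | hx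
      · rcases ihX hsX x hx with h | h
        · exact Or.inl (Or.inl h)
        · exact Or.inr (Or.inl h)
      · rcases ihY hsY x hx with h | h
        · exact Or.inl (Or.inr h)
        · exact Or.inr (Or.inr h)
  | impl X Y ihX ihY =>
      intro hsub x hx
      have hsX : annList X ⊆ annList A := fun y hy => hsub (by simp [annList]; exact Or.inl hy)
      have hsY : annList Y ⊆ annList A := fun y hy => hsub (by simp [annList]; exact Or.inr hy)
      simp only [realise, svarsF, List.mem_append] at hx ⊢
      rcases hx with hx | hx
      · rcases ihX hsX x hx with h | h
        · exact Or.inl (Or.inl h)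
        · exact Or.inr (Or.inl h)
      · rcases ihY hsY x hx with h | h
        · exact Or.inl (Or.inr h)
        · exact Or.inr (Or.inr h)
  | box m X ih =>
      intro hsub x hx
      have hsX : annList X ⊆ annList A := fun y hy => hsub (by simp [annList]; exact Or.inr hy)
      simp only [realise, svarsF, List.mem_append] at hx ⊢
      rcases hx with hx | hx
      · -- x ∈ svarsP (rpF A rp1 rp2 m)
        by_cases hm : m % 4 = 1
        · rw [rpF, if_pos hm] at hx; simp [svarsP] at hx
        · rw [rpF, if_neg hm] at hx
          rcases hsc : scope? A m with _ | C
          · rw [hsc] at hx; exact Or.inl (Or.inl hx)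
          · rw [hsc] at hx
            simp only [svarsP, List.mem_append, (cTm_closed false C true).2,
              (cTm_closed true C true).2, List.not_mem_nil, List.mem_nil_iff,
              false_or, or_false] at hx
            rcases hx with hx | hx
            · exact Or.inl (Or.inl (svars_substP (svars_spF A) (svars_ssF A) _ x hx))
            · exact Or.inr (Or.inl (svars_substP (svars_spF A) (svars_ssF A) _ x hx))
      · rcases ih hsX x hx with h | h
        · exact Or.inl (Or.inr h)
        · exact Or.inr (Or.inr h)
  | dia m X ih =>
      intro hsub x hx
      have hsX : annList X ⊆ annList A := fun y hy => hsub (by simp [annList]; exact Or.inr hy)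
      simp only [realise, svarsF, List.mem_append] at hx ⊢
      rcases hx with hx | hx
      · by_cases hm : m % 4 = 3
        · rw [rsF, if_pos hm] at hx
          simp [svarsS] at hx
          subst hx
          have hmem : m ∈ annList A := hsub (by simp [annList])
          have : rs1 m = .svar (m / 4) := hr1 m hm hmem
          exact Or.inl (Or.inl (by simp [this, svarsS]))
        · rw [rsF, if_neg hm] at hx
          rcases hsc : scope? A m with _ | C
          · rw [hsc] at hx; exact Or.inl (Or.inl hx)
          · rw [hsc] at hx
            simp only [svarsS, List.mem_append, (cTm_closed false C true).2,
              (cTm_closed true C true).2, List.not_mem_nil, List.mem_nil_iff,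
              false_or, or_false] at hx
            rcases hx with hx | hx
            · exact Or.inl (Or.inl (svars_substS (svars_spF A) (svars_ssF A) _ x hx))
            · exact Or.inr (Or.inl (svars_substS (svars_spF A) (svars_ssF A) _ x hx))
      · rcases ih hsX x hx with h | h
        · exact Or.inl (Or.inr h)
        · exact Or.inr (Or.inr h)

end MergingAux3



section MergingMain

theorem main_ind (hT h4 : Bool) (A : AForm) (hA : ProperlyAnnotated A)
    (rp1 rp2 : Nat → PrfTm) (rs1 rs2 : Nat → SatTm)
    (h1 : IsRealOn rp1 rs1 A) (h2 : IsRealOn rp2 rs2 A) (i : Bool) :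
    ∀ (X : AForm) (p : Bool), Sub p X A →
      (p = true → DT hT h4 (cTm i true X)
        ((substF (spF A) (ssF A)
            (realise (bif i then rp2 else rp1) (bif i then rs2 else rs1) X)).impl
          (realise (rpF A rp1 rp2) (rsF A rs1 rs2) X))) ∧
      (p = false → DT hT h4 (cTm i false X)
        ((realise (rpF A rp1 rp2) (rsF A rs1 rs2) X).impl
          (substF (spF A) (ssF A)
            (realise (bif i then rp2 else rp1) (bif i then rs2 else rs1) X)))) := by
  intro X
  induction X with
  | bot =>
      intro p _
      constructor <;> intro _ <;> exact dtI _
  | atom n =>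
      intro p _
      constructor <;> intro _ <;> exact dtI _
  | and X Y ihX ihY =>
      intro p hs
      have hX := ihX p (sub_andl hs)
      have hY := ihY p (sub_andr hs)
      constructor <;> intro hp
      · exact dtAndMono (hX.1 hp) (hY.1 hp)
      · exact dtAndMono (hX.2 hp) (hY.2 hp)
  | or X Y ihX ihY =>
      intro p hs
      have hX := ihX p (sub_orl hs)
      have hY := ihY p (sub_orr hs)
      constructor <;> intro hp
      · exact dtOrMono (hX.1 hp) (hY.1 hp)
      · exact dtOrMono (hX.2 hp) (hY.2 hp)
  | impl X Y ihX ihY =>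
      intro p hs
      constructor <;> intro hp <;> subst hp
      · exact dtImplMono ((ihX false (sub_impll hs)).2 rfl) ((ihY true (sub_implr hs)).1 rfl)
      · exact dtImplMono ((ihX true (sub_impll hs)).1 rfl) ((ihY false (sub_implr hs)).2 rfl)
  | box m X ih =>
      intro p hs
      have hmem : m ∈ annList A := hs.ann (by simp [annList])
      have hm4 := hA.2.1 p m X hs
      have hpol := hA.2.2.2.1 p m X hs
      have hscope : scope? A m = some X := scope_eq_box hA.1 hs
      have ihX := ih p (sub_box hs)
      constructor <;> intro hp <;> subst hp
      · -- positive box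
        have hm2 : m % 2 = 0 := hpol.mp rfl
        have hm1 : ¬ m % 4 = 1 := by omega
        show DT hT h4 (modTm (cTm i true X)) _
        simp only [realise, substF, rpF, if_neg hm1, hscope]
        cases i
        · exact dtBoxL ((ihX.1 rfl)) _ _
        · exact dtBoxR ((ihX.1 rfl)) _ _
      · -- negative box
        have hm2 : ¬ m % 2 = 0 := fun h => by exact absurd (hpol.mpr h) (by decide)
        have hm1 : m % 4 = 1 := by omega
        have hn : m = 4 * (m / 4) + 1 := by omega
        have hscope' : scope? A (4 * (m / 4) + 1) = some X := by rw [← hn]; exact hscope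
        have hri : (bif i then rp2 else rp1) m = .pvar (m / 4) := by
          have e1 : rp1 m = .pvar (m / 4) := by
            have := h1.1 (m / 4) (by rw [← hn]; exact hmem)
            rw [← hn] at this; exact this
          have e2 : rp2 m = .pvar (m / 4) := by
            have := h2.1 (m / 4) (by rw [← hn]; exact hmem)
            rw [← hn] at this; exact this
          cases i
          · exact e1
          · exact e2
        show DT hT h4 (modTm (cTm i false X)) _
        simp only [realise, substF, rpF, if_pos hm1, hri, substP, spF, hscope']
        cases i
        · exact dtBoxL ((ihX.2 rfl)) _ _
        · exact dtBoxR ((ihX.2 rfl)) _ _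
  | dia m X ih =>
      intro p hs
      have hmem : m ∈ annList A := hs.ann (by simp [annList])
      have hm4 := hA.2.2.1 p m X hs
      have hpol := hA.2.2.2.2 p m X hs
      have hscope : scope? A m = some X := scope_eq_dia hA.1 hs
      have ihX := ih p (sub_dia hs)
      constructor <;> intro hp <;> subst hp
      · -- positive diamond
        have hm2 : m % 2 = 0 := hpol.mp rfl
        have hm3 : ¬ m % 4 = 3 := by omega
        show DT hT h4 (modTm (cTm i true X)) _
        simp only [realise, substF, rsF, if_neg hm3, hscope]
        cases i
        · exact dtDiaL ((ihX.1 rfl)) _ _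
        · exact dtDiaR ((ihX.1 rfl)) _ _
      · -- negative diamond
        have hm2 : ¬ m % 2 = 0 := fun h => by exact absurd (hpol.mpr h) (by decide)
        have hm3 : m % 4 = 3 := by omega
        have hn : m = 4 * (m / 4) + 3 := by omega
        have hscope' : scope? A (4 * (m / 4) + 3) = some X := by rw [← hn]; exact hscope
        have hri : (bif i then rs2 else rs1) m = .svar (m / 4) := by
          have e1 : rs1 m = .svar (m / 4) := by
            have := h1.2.1 (m / 4) (by rw [← hn]; exact hmem)
            rw [← hn] at this; exact this
          have e2 : rs2 m = .svar (m / 4) := by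
            have := h2.2.1 (m / 4) (by rw [← hn]; exact hmem)
            rw [← hn] at this; exact this
          cases i
          · exact e1
          · exact e2
        show DT hT h4 (modTm (cTm i false X)) _
        simp only [realise, substF, rsF, if_pos hm3, hri, substS, ssF, hscope']
        cases i
        · exact dtDiaL ((ihX.2 rfl)) _ _
        · exact dtDiaR ((ihX.2 rfl)) _ _

end MergingMain


/-- Realisation merging. -/
theorem realisation_merging (hT h4 : Bool) (A : AForm) (hA : ProperlyAnnotated A)
    (rp1 rp2 : Nat → PrfTm) (rs1 rs2 : Nat → SatTm)
    (h1 : IsRealOn rp1 rs1 A) (h2 : IsRealOn rp2 rs2 A) :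
    ∃ (rp : Nat → PrfTm) (rs : Nat → SatTm) (sp : Nat → PrfTm) (ss : Nat → SatTm),
      IsRealOn rp rs A ∧
      -- the domain of the substitution is contained in the negatively-annotated variables of A
      (∀ n : Nat, sp n ≠ PrfTm.pvar n → (4 * n + 1) ∈ annList A) ∧
      (∀ n : Nat, ss n ≠ SatTm.svar n → (4 * n + 3) ∈ annList A) ∧
      -- the substitution introduces no new variables
      (∀ n : Nat, sp n ≠ PrfTm.pvar n →
        (∀ m ∈ pvarsP (sp n), m ∈ pvarsF (realise rp1 rs1 A) ++ pvarsF (realise rp2 rs2 A)) ∧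
        (∀ m ∈ svarsP (sp n), m ∈ svarsF (realise rp1 rs1 A) ++ svarsF (realise rp2 rs2 A))) ∧
      (∀ n : Nat, ss n ≠ SatTm.svar n →
        (∀ m ∈ pvarsS (ss n), m ∈ pvarsF (realise rp1 rs1 A) ++ pvarsF (realise rp2 rs2 A)) ∧
        (∀ m ∈ svarsS (ss n), m ∈ svarsF (realise rp1 rs1 A) ++ svarsF (realise rp2 rs2 A))) ∧
      -- (1) positive subformulas
      (∀ X : AForm, Sub true X A →
        JThm hT h4 ((substF sp ss (realise rp1 rs1 X)).impl
          ((substF sp ss (realise rp2 rs2 X)).impl (realise rp rs X)))) ∧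
      -- (2) negative subformulas
      (∀ X : AForm, Sub false X A →
        JThm hT h4 ((realise rp rs X).impl (substF sp ss (realise rp1 rs1 X))) ∧
        JThm hT h4 ((realise rp rs X).impl (substF sp ss (realise rp2 rs2 X)))) := by
  have hr1fact : ∀ m, m % 4 = 3 → m ∈ annList A → rs1 m = .svar (m / 4) := by
    intro m hm hmem
    have hn : m = 4 * (m / 4) + 3 := by omega
    have := h1.2.1 (m / 4) (by rw [← hn]; exact hmem)
    rw [← hn] at this; exact this
  refine ⟨rpF A rp1 rp2, rsF A rs1 rs2, spF A, ssF A, ⟨?_, ?_, ?_⟩, ?_, ?_, ?_, ?_, ?_, ?_⟩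
  · -- IsRealOn (a)
    intro n _
    rw [rpF, if_pos (by omega)]
    congr 1
    omega
  · -- IsRealOn (b)
    intro n _
    rw [rsF, if_pos (by omega)]
    congr 1
    omega
  · -- IsRealOn (c)
    intro p k B hsub hk
    have hann : annList B ⊆ annList A := (sub_dia hsub).ann
    rcases svars_incl A rp1 rp2 rs1 rs2 hr1fact B hann k hk with h | h
    · exact h1.2.2 p k B hsub h
    · exact h2.2.2 p k B hsub h
  · -- domain sp
    intro n hne
    rcases hsc : scope? A (4 * n + 1) with _ | B
    · exfalso; apply hne; rw [spF, hsc]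
    · exact scope_mem hsc
  · -- domain ss
    intro n hne
    rcases hsc : scope? A (4 * n + 3) with _ | B
    · exfalso; apply hne; rw [ssF, hsc]
    · exact scope_mem hsc
  · -- no new variables, sp
    intro n hne
    rcases hsc : scope? A (4 * n + 1) with _ | B
    · exfalso; apply hne; rw [spF, hsc]
    · have hmem : (4 * n + 1) ∈ annList A := scope_mem hsc
      have hbox : ∃ p, Sub p (AForm.box (4 * n + 1) B) A := by
        rcases scope_sub hsc with h | ⟨p, hp⟩
        · exact h
        · exact absurd (hA.2.2.1 p _ B hp) (by omega)
      obtain ⟨p, hp⟩ := hbox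
      constructor
      · intro m hm
        have hmn : m = n := by
          rw [spF, hsc] at hm
          simp [pvarsP, (cTm_closed false B false).1, (cTm_closed true B false).1] at hm
          tauto
        subst hmn
        rw [List.mem_append]
        left
        apply pvars_realise_mono hp
        simp [realise, pvarsF, h1.1 _ hmem, pvarsP]
      · intro m hm
        exfalso
        rw [spF, hsc] at hm
        simp [svarsP, (cTm_closed false B false).2, (cTm_closed true B false).2] at hm
  · -- no new variables, ss
    intro n hne
    rcases hsc : scope? A (4 * n + 3) with _ | B
    · exfalso; apply hne; rw [ssF, hsc]
    · have hmem : (4 * n + 3) ∈ annList A := scope_mem hsc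
      have hdia : ∃ p, Sub p (AForm.dia (4 * n + 3) B) A := by
        rcases scope_sub hsc with ⟨p, hp⟩ | h
        · exact absurd (hA.2.1 p _ B hp) (by omega)
        · exact h
      obtain ⟨p, hp⟩ := hdia
      constructor
      · intro m hm
        exfalso
        rw [ssF, hsc] at hm
        simp [pvarsS, pvarsP, svarsS, (cTm_closed false B false).1, (cTm_closed true B false).1] at hm
      · intro m hm
        have hmn : m = n := by
          rw [ssF, hsc] at hm
          simp [svarsS, (cTm_closed false B false).2, (cTm_closed true B false).2] at hm
          tauto
        subst hmn
        rw [List.mem_append]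
        left
        apply svars_realise_mono hp
        simp [realise, svarsF, h1.2.1 _ hmem, svarsS]
  · -- (1) positive subformulas
    intro X hX
    have m1 := (main_ind hT h4 A hA rp1 rp2 rs1 rs2 h1 h2 false X true hX).1 rfl
    exact (dtComp (DT.ax (JAx.ax1
      (A := realise (rpF A rp1 rp2) (rsF A rs1 rs2) X)
      (B := substF (spF A) (ssF A) (realise rp2 rs2 X)))) m1).thm
  · -- (2) negative subformulas
    intro X hX
    exact ⟨((main_ind hT h4 A hA rp1 rp2 rs1 rs2 h1 h2 false X false hX).2 rfl).thm,
      ((main_ind hT h4 A hA rp1 rp2 rs1 rs2 h1 h2 true X false hX).2 rfl).thm⟩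

end JIKPaper
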